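/- arXiv:1311.1026 — 4 statements merged into one kernel-verified Lean document; each statement's English description precedes it below -/
import Mathlib

section
/- If δ is a limit ordinal with δ < β < λ, then there exists α_0 < δ such that for all α with α_0 ≤ α < δ and all ℓ < k(β,δ), we have γ_ℓ(β,δ) = γ_ℓ(β,α); in particular the walk ρ(β,δ) is an initial segment of the walk ρ(β,α). -/
noncomputable def walkStep (e : Ordinal → Set Ordinal) (α β : Ordinal) : Ordinal :=
  sInf {γ | γ ∈ e β ∧ α ≤ γ}

noncomputable def walk (e : Ordinal → Set Ordinal) (α β : Ordinal) : ℕ → Ordinal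
  | 0 => β
  | n + 1 => walkStep e α (walk e α β n)

/-- `k(β,α)`: the length of the walk, i.e. the first `k` with `γ_k(β,α) = α`. -/
noncomputable def kLen (e : Ordinal → Set Ordinal) (α β : Ordinal) : ℕ :=
  sInf {k : ℕ | walk e α β k = α}

/-- if `δ` is a limit ordinal with `δ < β < λ` then there is `α₀ < δ`
such that for all `α ∈ [α₀, δ)` and all `ℓ < k(β,δ)` we have
`γ_ℓ(β,δ) = γ_ℓ(β,α)`; in particular the walk `ρ(β,δ)` is an initial segment of
the walk `ρ(β,α)`. -/
theorem stmt2 (lam β δ : Ordinal) (e : Ordinal → Set Ordinal)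
    (hbl : β < lam) (hδβ : δ < β) (hδlim : Order.IsSuccLimit δ)
    (he0 : e 0 = ∅)
    (heS : ∀ γ, e (γ + 1) = {γ})
    (heL : ∀ β' < lam, Order.IsSuccLimit β' →
      e β' ⊆ Set.Iio β' ∧ (∀ x < β', ∃ y ∈ e β', x ≤ y) ∧
      ∀ x < β', (e β' ∩ Set.Iio x).Nonempty → sSup (e β' ∩ Set.Iio x) = x → x ∈ e β') :
    ∃ α₀ < δ, ∀ α, α₀ ≤ α → α < δ →
      ∀ l, l < kLen e δ β → walk e α β l = walk e δ β l := by
  have hδ0 : (0 : Ordinal) < δ := by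
    rcases eq_or_lt_of_le (zero_le (a := δ)) with h | h
    · exact absurd (h ▸ isMin_bot) hδlim.1
    · exact h
  set k := kLen e δ β with hkdef
  rcases Nat.eq_zero_or_pos k with hk0 | hkpos
  · exact ⟨0, hδ0, fun α _ _ l hl => absurd hl (by omega)⟩
  have hSetne : {n : ℕ | walk e δ β n = δ}.Nonempty := by
    by_contra h
    rw [Set.not_nonempty_iff_eq_empty] at h
    have : k = 0 := by rw [hkdef, kLen, h]; simp
    omega
  have hwk : walk e δ β k = δ := Nat.sInf_mem hSetne
  have hne : ∀ l, l < k → walk e δ β l ≠ δ := fun l hl => Nat.notMem_of_lt_sInf hl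
  have hstuck : ∀ m, walk e δ β m = 0 → ∀ j, walk e δ β (m + j) = 0 := by
    intro m hm j
    induction j with
    | zero => exact hm
    | succ j ih =>
      show walkStep e δ (walk e δ β (m + j)) = 0
      rw [ih, walkStep]
      convert Ordinal.sInf_empty using 2
      rw [Set.eq_empty_iff_forall_notMem]
      rintro x ⟨hx, -⟩
      rw [he0] at hx
      exact hx
  -- nonemptiness of the step sets along the walk
  have hSne : ∀ l, l + 1 ≤ k → {x | x ∈ e (walk e δ β l) ∧ δ ≤ x}.Nonempty := by
    intro l hl
    by_contra h
    rw [Set.not_nonempty_iff_eq_empty] at h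
    have h1 : walk e δ β (l + 1) = 0 := by
      show walkStep e δ (walk e δ β l) = 0
      rw [walkStep, h]
      exact Ordinal.sInf_empty
    have h2 : walk e δ β ((l + 1) + (k - (l + 1))) = 0 := hstuck _ h1 _
    rw [show (l + 1) + (k - (l + 1)) = k by omega, hwk] at h2
    exact hδ0.ne' h2
  have hstepmem : ∀ l, l + 1 ≤ k →
      walk e δ β (l + 1) ∈ {x | x ∈ e (walk e δ β l) ∧ δ ≤ x} := by
    intro l hl
    exact csInf_mem (hSne l hl)
  -- bounds on the walk
  have hA : ∀ l, l ≤ k → δ ≤ walk e δ β l ∧ walk e δ β l ≤ β := by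
    intro l hl
    induction l with
    | zero => exact ⟨hδβ.le, le_refl β⟩
    | succ l ih =>
      obtain ⟨ih1, ih2⟩ := ih (by omega)
      obtain ⟨hm1, hm2⟩ := hstepmem l hl
      refine ⟨hm2, ?_⟩
      rcases Ordinal.zero_or_succ_or_isSuccLimit (walk e δ β l) with h0 | ⟨γ, hγ⟩ | hlim
      · rw [h0, he0] at hm1; exact absurd hm1 (Set.notMem_empty _)
      · rw [← hγ, ← Ordinal.add_one_eq_succ, heS] at hm1
        rw [hm1]
        have : γ + 1 ≤ β := by rw [Ordinal.add_one_eq_succ, hγ]; exact ih2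
        exact le_of_lt (lt_of_lt_of_le (lt_add_one γ) this)
      · have hlim' : Order.IsSuccLimit (walk e δ β l) :=
          ⟨fun hm => absurd (hm (zero_le (a := walk e δ β l))) hlim.pos.not_ge, hlim.isSuccPrelimit⟩
        have := (heL _ (lt_of_le_of_lt ih2 hbl) hlim').1 hm1
        exact le_of_lt (lt_of_lt_of_le this ih2)
  -- thresholds
  have hT : ∀ l, l + 1 < k → ∃ t < δ, ∀ x ∈ e (walk e δ β l), t ≤ x → δ ≤ x := by
    intro l hl
    have hγlβ : walk e δ β l ≤ β := (hA l (by omega)).2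
    have hnext : δ < walk e δ β (l + 1) :=
      lt_of_le_of_ne (hA (l + 1) (by omega)).1 (Ne.symm (hne (l + 1) hl))
    rcases Ordinal.zero_or_succ_or_isSuccLimit (walk e δ β l) with h0 | ⟨γ, hγ⟩ | hlim
    · obtain ⟨hm1, -⟩ := hstepmem l (by omega)
      rw [h0, he0] at hm1
      exact absurd hm1 (Set.notMem_empty _)
    · obtain ⟨hm1, hm2⟩ := hstepmem l (by omega)
      rw [← hγ, ← Ordinal.add_one_eq_succ, heS] at hm1
      refine ⟨0, hδ0, ?_⟩
      intro x hx _
      rw [← hγ, ← Ordinal.add_one_eq_succ, heS] at hx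
      rw [hx, ← hm1]
      exact hm2
    · have hlim' : Order.IsSuccLimit (walk e δ β l) :=
        ⟨fun hm => absurd (hm (zero_le (a := walk e δ β l))) hlim.pos.not_ge, hlim.isSuccPrelimit⟩
      have hγllam : walk e δ β l < lam := lt_of_le_of_lt hγlβ hbl
      have hδγl : δ < walk e δ β l :=
        lt_of_le_of_ne (hA l (by omega)).1 (Ne.symm (hne l (by omega)))
      by_contra hcon
      push_neg at hcon
      -- from ¬∃ threshold: for every t < δ there is x ∈ e γl with t ≤ x < δ
      have hx : ∀ t < δ, ∃ x ∈ e (walk e δ β l), t ≤ x ∧ x < δ := hcon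
      set A := e (walk e δ β l) ∩ Set.Iio δ with hA'
      have hAne : A.Nonempty := by
        obtain ⟨x, h1, -, h3⟩ := hx 0 hδ0
        exact ⟨x, h1, h3⟩
      have hAbdd : BddAbove A := ⟨δ, fun x hxA => le_of_lt hxA.2⟩
      have hAsup : sSup A = δ := by
        refine le_antisymm (csSup_le hAne fun x hxA => le_of_lt hxA.2) ?_
        by_contra hlt
        push_neg at hlt
        have h1 : sSup A + 1 < δ := by
          have := hδlim.succ_lt hlt
          rwa [← Ordinal.add_one_eq_succ] at this
        obtain ⟨x, hx1, hx2, hx3⟩ := hx (sSup A + 1) h1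
        have : x ≤ sSup A := le_csSup hAbdd ⟨hx1, hx3⟩
        have : sSup A + 1 ≤ sSup A := le_trans hx2 this
        exact absurd this (by simpa using (lt_add_one (sSup A)).not_ge)
      have hδmem : δ ∈ e (walk e δ β l) :=
        (heL _ hγllam hlim').2.2 δ hδγl hAne hAsup
      have : walk e δ β (l + 1) ≤ δ := by
        show walkStep e δ (walk e δ β l) ≤ δ
        exact csInf_le (OrderBot.bddBelow _) ⟨hδmem, le_refl δ⟩
      exact absurd this hnext.not_ge
  -- main induction: find thresholds up to j
  have main : ∀ j : ℕ, ∃ α₀ < δ, ∀ α, α₀ ≤ α → α < δ →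
      ∀ l, l ≤ j → l < k → walk e α β l = walk e δ β l := by
    intro j
    induction j with
    | zero =>
      exact ⟨0, hδ0, fun α _ _ l hl _ => by
        rw [Nat.le_zero.mp hl]; rfl⟩
    | succ j ih =>
      obtain ⟨α₀, hα₀, hind⟩ := ih
      rcases Nat.lt_or_ge (j + 1) k with hjk | hjk
      · obtain ⟨t, ht, htprop⟩ := hT j hjk
        refine ⟨max α₀ t, max_lt hα₀ ht, ?_⟩
        intro α hα hαδ l hl hlk
        rcases Nat.lt_or_ge l (j + 1) with hl' | hl'
        · exact hind α (le_trans (le_max_left _ _) hα) hαδ l (by omega) hlk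
        · have hlj : l = j + 1 := by omega
          subst hlj
          have hprev : walk e α β j = walk e δ β j :=
            hind α (le_trans (le_max_left _ _) hα) hαδ j (le_refl j) (by omega)
          show walkStep e α (walk e α β j) = walkStep e δ (walk e δ β j)
          rw [hprev]
          unfold walkStep
          congr 1
          ext x
          simp only [Set.mem_setOf_eq, and_congr_right_iff]
          intro hxe
          constructor
          · intro hαx
            exact htprop x hxe (le_trans (le_trans (le_max_right _ _) hα) hαx)
          · intro hδx
            exact le_trans (le_of_lt hαδ) hδx
      · exact ⟨α₀, hα₀, fun α hα hαδ l hl hlk =>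
          hind α hα hαδ l (by omega) hlk⟩
  obtain ⟨α₀, hα₀, hmain⟩ := main k
  exact ⟨α₀, hα₀, fun α hα hαδ l hl => hmain α hα hαδ l (by omega) hl⟩
end

section
/- If δ is a limit ordinal, δ < β < λ, and δ is a non-accumulation point of e_{γ_lt(β,δ)} (where γ_lt(β,δ) is the last ordinal of the walk ρ(β,δ)), then there exists α_0 < δ such that for all α ∈ [α_0, δ), the sequence ρ(β,δ)⌢⟨δ⟩ is an initial segment of ρ(β,α). -/
/-- if `δ` is limit, `δ < β < λ`, and `δ` is a non-accumulation point of
`e (γ_lt(β,δ))` (where `γ_lt(β,δ) = γ_{k(β,δ)-1}(β,δ)` is the last ordinal of the walk),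
then there is `α₀ < δ` such that for every `α ∈ [α₀, δ)` the sequence `ρ(β,δ)⌢⟨δ⟩` is an
initial segment of `ρ(β,α)`: the first `k(β,δ)` steps of the two walks agree, and the
next step of the walk from `β` to `α` is exactly `δ`. -/
theorem stmt3 (lam β δ : Ordinal) (e : Ordinal → Set Ordinal)
    (hbl : β < lam) (hδβ : δ < β) (hδlim : Order.IsSuccLimit δ)
    (he0 : e 0 = ∅)
    (heS : ∀ γ, e (γ + 1) = {γ})
    (heL : ∀ β' < lam, Order.IsSuccLimit β' →
      e β' ⊆ Set.Iio β' ∧ (∀ x < β', ∃ y ∈ e β', x ≤ y) ∧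
      ∀ x < β', (e β' ∩ Set.Iio x).Nonempty → sSup (e β' ∩ Set.Iio x) = x → x ∈ e β')
    -- `δ ∈ nacc (e (γ_lt(β,δ)))`:
    (hmem : δ ∈ e (walk e δ β (kLen e δ β - 1)))
    (hnacc : ∃ x < δ, ∀ y ∈ e (walk e δ β (kLen e δ β - 1)), y < δ → y ≤ x) :
    ∃ α₀ < δ, ∀ α, α₀ ≤ α → α < δ →
      (∀ l, l < kLen e δ β → walk e α β l = walk e δ β l) ∧
      walk e α β (kLen e δ β) = δ := by
  set k := kLen e δ β with hk
  have hδ0 : (0 : Ordinal) < δ := by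
    rcases eq_or_lt_of_le (zero_le : (0 : Ordinal) ≤ δ) with h | h
    · exact absurd (h ▸ isMin_bot) hδlim.1
    · exact h
  have hsuccδ : ∀ x : Ordinal, x < δ → x + 1 < δ := by
    intro x hx
    rw [Ordinal.add_one_eq_succ]
    exact hδlim.2.succ_lt hx
  -- a step from a set containing δ (with all elements compared to δ) lands on δ
  have hstepδ : ∀ c : Ordinal, δ ∈ e c → walkStep e δ c = δ := by
    intro c hc
    apply le_antisymm
    · exact csInf_le' ⟨hc, le_rfl⟩
    · exact le_csInf ⟨δ, hc, le_rfl⟩ fun b hb => hb.2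
  have hsucc : walk e δ β ((k - 1) + 1) = δ := hstepδ _ hmem
  have hne : {n : ℕ | walk e δ β n = δ}.Nonempty := ⟨_, hsucc⟩
  have hwk : walk e δ β k = δ := Nat.sInf_mem hne
  have hk0 : k ≠ 0 := by
    intro h
    rw [h] at hwk
    exact hδβ.ne' (by simpa [walk] using hwk)
  have hmin : ∀ l, l < k → walk e δ β l ≠ δ := fun l hl h =>
    absurd (Nat.sInf_le h) (Nat.not_le.mpr hl)
  -- if the walk hits 0 it stays at 0
  have hzero : ∀ m n, m ≤ n → walk e δ β m = 0 → walk e δ β n = 0 := by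
    intro m n hmn h0
    induction n with
    | zero =>
      have : m = 0 := Nat.le_zero.mp hmn
      rw [← this]; exact h0
    | succ n ih =>
      rcases Nat.lt_or_ge m (n+1) with h | h
      · have hn : walk e δ β n = 0 := ih (by omega)
        show walkStep e δ (walk e δ β n) = 0
        rw [hn, walkStep]
        have : {γ | γ ∈ e 0 ∧ δ ≤ γ} = (∅ : Set Ordinal) := by
          simp [he0]
        rw [this, Ordinal.sInf_empty]
      · have : m = n + 1 := by omega
        rw [← this]; exact h0
  -- the set of next candidates along the walk to δ
  have hSne : ∀ l, l + 1 ≤ k → {γ | γ ∈ e (walk e δ β l) ∧ δ ≤ γ}.Nonempty := by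
    intro l hl
    by_contra hS
    have h0 : walk e δ β (l + 1) = 0 := by
      show walkStep e δ (walk e δ β l) = 0
      rw [walkStep, Set.not_nonempty_iff_eq_empty.mp hS, Ordinal.sInf_empty]
    have := hzero (l+1) k hl h0
    rw [hwk] at this
    exact hδ0.ne' this
  -- basic facts along the walk: each earlier step is above δ and below lam
  have hfacts : ∀ l, l < k → δ < walk e δ β l ∧ walk e δ β l < lam := by
    intro l hl
    induction l with
    | zero => exact ⟨by simpa [walk] using hδβ, by simpa [walk] using hbl⟩
    | succ l ih =>
      obtain ⟨hδl, hllam⟩ := ih (by omega)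
      have hmemS : walk e δ β (l+1) ∈ {γ | γ ∈ e (walk e δ β l) ∧ δ ≤ γ} :=
        csInf_mem (hSne l (by omega))
      have hδlt : δ < walk e δ β (l+1) :=
        lt_of_le_of_ne hmemS.2 (fun h => hmin _ hl h.symm)
      have hlt : walk e δ β (l+1) < walk e δ β l := by
        rcases Ordinal.zero_or_succ_or_isSuccLimit (walk e δ β l) with h0 | ⟨γ, hγ⟩ | hlim
        · exact absurd h0 (hδ0.trans hδl).ne'
        · have hel : walk e δ β (l+1) = γ := by
            have h1 := hmemS.1
            rw [← hγ, Order.succ_eq_add_one, heS] at h1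
            exact h1
          rw [hel, ← hγ]; exact Order.lt_succ γ
        · have hlim' : Order.IsSuccLimit (walk e δ β l) := by
            refine ⟨?_, hlim.isSuccPrelimit⟩
            intro hm
            exact (hδ0.trans hδl).ne'
              (by simpa using isMin_iff_eq_bot.mp hm)
          exact (heL _ hllam hlim').1 hmemS.1
      exact ⟨hδlt, hlt.trans hllam⟩
  -- for l+1 < k, δ is not in e (walk l)
  have hnotmem : ∀ l, l + 1 < k → δ ∉ e (walk e δ β l) := by
    intro l hl hc
    have : walk e δ β (l+1) = δ := hstepδ _ hc
    exact hmin _ hl this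
  -- for l+1 < k, the elements of e (walk l) below δ are bounded below δ
  have hbound : ∀ l, l + 1 < k → ∃ x < δ, ∀ y ∈ e (walk e δ β l), y < δ → y ≤ x := by
    intro l hl
    obtain ⟨hδl, hllam⟩ := hfacts l (by omega)
    rcases Ordinal.zero_or_succ_or_isSuccLimit (walk e δ β l) with h0 | ⟨γ, hγ⟩ | hlim
    · exact absurd h0 (hδ0.trans hδl).ne'
    · rcases lt_or_ge γ δ with h | h
      · refine ⟨γ, h, fun y hy _ => ?_⟩
        rw [← hγ, Order.succ_eq_add_one, heS] at hy
        exact le_of_eq hy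
      · refine ⟨0, hδ0, fun y hy hyδ => ?_⟩
        rw [← hγ, Order.succ_eq_add_one, heS] at hy
        exact absurd (hy ▸ hyδ) (not_lt.mpr h)
    · have hlim' : Order.IsSuccLimit (walk e δ β l) := by
        refine ⟨?_, hlim.isSuccPrelimit⟩
        intro hm
        exact (hδ0.trans hδl).ne' (by simpa using isMin_iff_eq_bot.mp hm)
      by_contra hno
      push_neg at hno
      -- then e (walk l) ∩ Iio δ has sup δ, so δ ∈ e (walk l), contradiction
      have hneS : (e (walk e δ β l) ∩ Set.Iio δ).Nonempty := by
        obtain ⟨y, hy, hyδ, _⟩ := hno 0 hδ0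
        exact ⟨y, hy, hyδ⟩
      have hsup : sSup (e (walk e δ β l) ∩ Set.Iio δ) = δ := by
        apply le_antisymm
        · exact csSup_le hneS fun y hy => hy.2.le
        · by_contra hlt
          push_neg at hlt
          obtain ⟨y, hy, hyδ, hxy⟩ := hno _ hlt
          have hbdd : BddAbove (e (walk e δ β l) ∩ Set.Iio δ) :=
            ⟨δ, fun z hz => hz.2.le⟩
          exact absurd (le_csSup hbdd ⟨hy, hyδ⟩) (not_le.mpr hxy)
      exact hnotmem l hl ((heL _ hllam hlim').2.2 δ hδl hneS hsup)
  -- prefix agreement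
  have hprefix : ∀ n, n < k → ∃ α₀ < δ, ∀ α, α₀ ≤ α → α < δ →
      ∀ l, l ≤ n → walk e α β l = walk e δ β l := by
    intro n hn
    induction n with
    | zero =>
      exact ⟨0, hδ0, fun α _ _ l hl => by
        have : l = 0 := Nat.le_zero.mp hl
        rw [this]
        rfl⟩
    | succ n ih =>
      obtain ⟨α₀, hα₀, hIH⟩ := ih (by omega)
      obtain ⟨x, hx, hxb⟩ := hbound n (by omega)
      refine ⟨max α₀ (x + 1), max_lt hα₀ (hsuccδ x hx), fun α hα hαδ l hl => ?_⟩
      rcases Nat.lt_or_ge l (n+1) with h | h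
      · exact hIH α (le_trans (le_max_left _ _) hα) hαδ l (by omega)
      · have hl' : l = n + 1 := by omega
        subst hl'
        have heq : walk e α β n = walk e δ β n :=
          hIH α (le_trans (le_max_left _ _) hα) hαδ n le_rfl
        show walkStep e α (walk e α β n) = walkStep e δ (walk e δ β n)
        rw [heq, walkStep, walkStep]
        congr 1
        ext γ
        constructor
        · rintro ⟨hγ, hαγ⟩
          refine ⟨hγ, ?_⟩
          by_contra hγδ
          push_neg at hγδ
          have : γ ≤ x := hxb γ hγ hγδ
          have hx1 : x + 1 ≤ α := le_trans (le_max_right _ _) hα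
          exact absurd (le_trans hαγ this)
            (not_le.mpr (lt_of_lt_of_le (lt_add_one x) hx1))
        · rintro ⟨hγ, hδγ⟩
          exact ⟨hγ, le_trans hαδ.le hδγ⟩
  -- main conclusion
  obtain ⟨α₀, hα₀, hpre⟩ := hprefix (k - 1) (by omega)
  obtain ⟨x, hx, hxb⟩ := hnacc
  refine ⟨max α₀ (x + 1), max_lt hα₀ (hsuccδ x hx), fun α hα hαδ => ?_⟩
  have hpre' : ∀ l, l < k → walk e α β l = walk e δ β l := fun l hl =>
    hpre α (le_trans (le_max_left _ _) hα) hαδ l (by omega)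
  refine ⟨hpre', ?_⟩
  have hkk : k = (k - 1) + 1 := by omega
  rw [hkk]
  show walkStep e α (walk e α β (k - 1)) = δ
  rw [hpre' (k-1) (by omega)]
  apply le_antisymm
  · exact csInf_le' ⟨hmem, hαδ.le⟩
  · refine le_csInf ⟨δ, hmem, hαδ.le⟩ fun b hb => ?_
    by_contra hbδ
    push_neg at hbδ
    have : b ≤ x := hxb b hb.1 hbδ
    have hx1 : x + 1 ≤ α := le_trans (le_max_right _ _) hα
    exact absurd (le_trans hb.2 this)
      (not_le.mpr (lt_of_lt_of_le (lt_add_one x) hx1))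
end

section
/- If 0 < α < β < λ, ℓ < k(β,α), and γ = γ_ℓ(β,α), then ρ(β,α) = ρ(β,γ) ⌢ ρ(γ,α): the walk from β to α decomposes as the concatenation of the walk from β to γ followed by the walk from γ to α. -/
/-- `ρ(β,α) = ⟨γ_0(β,α), …, γ_{k(β,α)-1}(β,α)⟩`, the walk from `β` to `α`
(excluding the final value `α`); `ρ(α,α)` is the empty sequence. -/
noncomputable def rho (e : Ordinal → Set Ordinal) (α β : Ordinal) : List Ordinal :=
  (List.range (kLen e α β)).map (walk e α β)

/-- if `0 < α < β < λ`, `ℓ < k(β,α)` and `γ = γ_ℓ(β,α)`, then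
`ρ(β,α) = ρ(β,γ) ⌢ ρ(γ,α)`. -/
theorem stmt4 (lam β α : Ordinal) (e : Ordinal → Set Ordinal)
    (hbl : β < lam) (h0α : 0 < α) (hαβ : α < β)
    (he0 : e 0 = ∅)
    (heS : ∀ γ, e (γ + 1) = {γ})
    (heL : ∀ β' < lam, Order.IsSuccLimit β' →
      e β' ⊆ Set.Iio β' ∧ (∀ x < β', ∃ y ∈ e β', x ≤ y) ∧
      ∀ x < β', (e β' ∩ Set.Iio x).Nonempty → sSup (e β' ∩ Set.Iio x) = x → x ∈ e β') :
    ∀ l, l < kLen e α β →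
      rho e α β = rho e (walk e α β l) β ++ rho e α (walk e α β l) := by
  intro l hl
  -- abbreviations
  set x : ℕ → Ordinal := walk e α β with hx
  set k : ℕ := kLen e α β with hkdef
  -- k belongs to the defining set and is minimal
  have hSne : {n : ℕ | walk e α β n = α}.Nonempty := by
    by_contra h
    rw [Set.not_nonempty_iff_eq_empty] at h
    have : k = 0 := by rw [hkdef, kLen, h, Nat.sInf_empty]
    omega
  have hxk : x k = α := Nat.sInf_mem hSne
  have hmin : ∀ n < k, x n ≠ α := fun n hn => Nat.notMem_of_lt_sInf hn
  -- each value y ∈ e z with 0 < z < lam satisfies y < z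
  have hdown : ∀ z, 0 < z → z < lam → ∀ y ∈ e z, y < z := by
    intro z hz hzl y hy
    rcases Ordinal.zero_or_succ_or_isSuccLimit z with h0 | ⟨b, hb⟩ | hlim
    · exact absurd h0 hz.ne'
    · rw [← hb, ← Ordinal.add_one_eq_succ] at hy hz hzl ⊢
      rw [heS b] at hy
      rw [hy]
      exact lt_of_lt_of_le (lt_add_one b) le_rfl
    · have hsl : Order.IsSuccLimit z :=
        ⟨not_isMin_iff_ne_bot.mpr hlim.pos.ne', hlim.isSuccPrelimit⟩
      exact (heL z hzl hsl).1 hy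
  -- key step lemma: for n < k, α ≤ x (n+1) and x (n+1) ∈ e (x n)
  have hstep : ∀ n < k, α ≤ x (n + 1) ∧ x (n + 1) ∈ e (x n) := by
    intro n hn
    have h024 : x (n + 1) = sInf {γ | γ ∈ e (x n) ∧ α ≤ γ} := rfl
    by_cases hne : {γ | γ ∈ e (x n) ∧ α ≤ γ}.Nonempty
    · have := csInf_mem hne
      rw [← h024] at this
      exact ⟨this.2, this.1⟩
    · exfalso
      rw [Set.not_nonempty_iff_eq_empty] at hne
      have hz1 : x (n + 1) = 0 := by rw [h024, hne]; simp
      have hzero : ∀ m, x (n + 1 + m) = 0 := by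
        intro m
        induction m with
        | zero => exact hz1
        | succ m ih =>
          have : x (n + 1 + (m + 1)) = sInf {γ | γ ∈ e (x (n + 1 + m)) ∧ α ≤ γ} := rfl
          rw [this, ih, he0]
          simp
      have hk1 : n + 1 + (k - (n + 1)) = k := by omega
      have := hzero (k - (n + 1))
      rw [hk1, hxk] at this
      exact h0α.ne' this
  have hα0 : ∀ n ≤ k, α ≤ x n := by
    intro n hn
    cases n with
    | zero => exact hαβ.le
    | succ n => exact (hstep n (by omega)).1
  -- strict decrease plus bound below lam
  have hdec : ∀ n ≤ k, x n < lam ∧ (n < k → x (n + 1) < x n) := by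
    intro n
    induction n with
    | zero =>
      intro _
      refine ⟨hbl, fun h0k => ?_⟩
      exact hdown (x 0) (h0α.trans hαβ) hbl _ (hstep 0 h0k).2
    | succ n ih =>
      intro hn
      obtain ⟨hlam, hlt⟩ := ih (by omega)
      have hxn1 : x (n + 1) < lam := (hlt (by omega)).trans hlam
      refine ⟨hxn1, fun hnk => ?_⟩
      have hpos : 0 < x (n + 1) := lt_of_lt_of_le h0α (hα0 (n + 1) (by omega))
      exact hdown (x (n + 1)) hpos hxn1 _ (hstep (n + 1) hnk).2
  have hstrict : ∀ m n, m < n → n ≤ k → x n < x m := by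
    intro m n hmn hnk
    induction n with
    | zero => omega
    | succ n ih =>
      have h1 : x (n + 1) < x n := (hdec n (by omega)).2 (by omega)
      rcases Nat.lt_or_ge m n with h | h
      · exact h1.trans (ih h (by omega))
      · have : m = n := by omega
        rw [this]; exact h1
  -- γ := x l
  have hαγ : α ≤ x l := hα0 l hl.le
  -- Part 1: the walk from β to γ agrees with the walk from β to α up to l
  have hweq : ∀ n ≤ l, walk e (x l) β n = x n := by
    intro n hn
    induction n with
    | zero => rfl
    | succ n ih =>
      have hnl : n ≤ l := by omega
      have hnk : n < k := by omega
      have h1 : walk e (x l) β (n + 1) = sInf {γ | γ ∈ e (x n) ∧ x l ≤ γ} := by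
        show walkStep e (x l) (walk e (x l) β n) = _
        rw [ih hnl]; rfl
      have hγle : x l ≤ x (n + 1) := by
        rcases Nat.lt_or_ge (n + 1) l with h | h
        · exact (hstrict (n + 1) l h hl.le).le
        · have : n + 1 = l := by omega
          rw [this]
      have hmem : x (n + 1) ∈ {γ | γ ∈ e (x n) ∧ x l ≤ γ} :=
        ⟨(hstep n hnk).2, hγle⟩
      have hsub : {γ | γ ∈ e (x n) ∧ x l ≤ γ} ⊆ {γ | γ ∈ e (x n) ∧ α ≤ γ} :=
        fun y hy => ⟨hy.1, hαγ.trans hy.2⟩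
      have hle1 : sInf {γ | γ ∈ e (x n) ∧ x l ≤ γ} ≤ x (n + 1) :=
        csInf_le (OrderBot.bddBelow _) hmem
      have hle2 : x (n + 1) ≤ sInf {γ | γ ∈ e (x n) ∧ x l ≤ γ} := by
        have : x (n + 1) = sInf {γ | γ ∈ e (x n) ∧ α ≤ γ} := rfl
        rw [this]
        exact csInf_le_csInf (OrderBot.bddBelow _) ⟨x (n + 1), hmem⟩ hsub
      rw [h1, le_antisymm hle1 hle2]
  have hklen1 : kLen e (x l) β = l := by
    have hmem : l ∈ {n : ℕ | walk e (x l) β n = x l} := hweq l le_rfl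
    refine le_antisymm (Nat.sInf_le hmem) ?_
    by_contra h
    push_neg at h
    have hm := Nat.sInf_mem ⟨l, hmem⟩
    set m := sInf {n : ℕ | walk e (x l) β n = x l} with hmdef
    have hml : m < l := h
    have hm' : walk e (x l) β m = x l := hm
    rw [hweq m hml.le] at hm'
    exact absurd hm'.symm (hstrict m l hml hl.le).ne
  -- Part 2: the walk from γ to α is the tail of the walk from β to α
  have hgw : ∀ m, walk e α (x l) m = x (l + m) := by
    intro m
    induction m with
    | zero => rfl
    | succ m ih =>
      show walkStep e α (walk e α (x l) m) = x (l + (m + 1))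
      rw [ih]
      rfl
  have hklen2 : kLen e α (x l) = k - l := by
    have hmem : k - l ∈ {m : ℕ | walk e α (x l) m = α} := by
      show walk e α (x l) (k - l) = α
      rw [hgw, show l + (k - l) = k by omega, hxk]
    refine le_antisymm (Nat.sInf_le hmem) ?_
    by_contra h
    push_neg at h
    have hm := Nat.sInf_mem ⟨k - l, hmem⟩
    set m := sInf {n : ℕ | walk e α (x l) n = α} with hmdef
    have hmeq : kLen e α (x l) = m := rfl
    have hm' : walk e α (x l) m = α := hm
    rw [hgw m] at hm'
    exact hmin (l + m) (by omega) hm'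
  -- assemble
  obtain ⟨j, hj⟩ : ∃ j, k = l + j := ⟨k - l, by omega⟩
  rw [rho, rho, rho, hklen1, hklen2, ← hkdef, hj, Nat.add_sub_cancel_left,
    List.range_add, List.map_append, List.map_map]
  congr 1
  · exact List.map_congr_left (fun n hn => (hweq n (List.mem_range.mp hn).le).symm)
  · refine List.map_congr_left (fun n _ => ?_)
    show x (l + n) = walk e α (x l) n
    exact (hgw n).symm
end

section
/- If δ ∈ S (a set of ordinals of cofinality ∂ below λ = ∂⁺), each e_γ for limit γ is a club of γ of order type cf(γ) disjoint from the set of ordinals of cofinality ∂, and δ < β < λ, then the last ordinal of the walk from β to δ satisfies γ_lt(β,δ) = δ + 1; i.e., the walk from β to δ always passes through δ+1. -/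
/-- let `λ = ∂⁺` with `∂` regular, `S ⊆ {α < λ : cf α = ∂}`, and let
`⟨e_γ⟩` be a ladder system where each `e_γ`, for limit `γ < λ`, is a club of `γ` of
order type `cf γ` disjoint from the set of ordinals of cofinality `∂`.  If `δ ∈ S`
and `δ < β < λ`, then the last ordinal of the walk from `β` to `δ` is `δ + 1`:
`γ_lt(β,δ) = γ_{k(β,δ)-1}(β,δ) = δ + 1`. -/
theorem stmt5 (par : Cardinal.{0}) (hpar : par.IsRegular)
    (lam : Ordinal.{0}) (hlam : lam = (Order.succ par).ord)
    (S : Set Ordinal.{0}) (hS : ∀ δ ∈ S, δ < lam ∧ δ.cof = par)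
    (e : Ordinal.{0} → Set Ordinal.{0})
    (he0 : e 0 = ∅)
    (heS : ∀ γ, e (γ + 1) = {γ})
    (heL : ∀ γ < lam, Order.IsSuccLimit γ →
      e γ ⊆ Set.Iio γ ∧ (∀ x < γ, ∃ y ∈ e γ, x ≤ y) ∧
      (∀ x < γ, (e γ ∩ Set.Iio x).Nonempty → sSup (e γ ∩ Set.Iio x) = x → x ∈ e γ) ∧
      Ordinal.type (Subrel ((· < ·) : Ordinal.{0} → Ordinal.{0} → Prop) (· ∈ e γ)) =
        Ordinal.lift.{1,0} γ.cof.ord ∧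
      ∀ x ∈ e γ, x.cof ≠ par)
    (δ β : Ordinal.{0}) (hδS : δ ∈ S) (hδβ : δ < β) (hβlam : β < lam) :
    walk e δ β (kLen e δ β - 1) = δ + 1 := by
  obtain ⟨hδlam, hδcof⟩ := hS δ hδS
  have hδ0 : δ ≠ 0 := by
    intro h
    rw [h, Ordinal.cof_zero] at hδcof
    exact absurd hδcof.symm (Cardinal.aleph0_pos.trans_le hpar.aleph0_le).ne'
  -- The step from any γ with δ < γ < lam lands in [δ, γ).
  have step : ∀ γ : Ordinal, δ < γ → γ < lam →
      δ ≤ walkStep e δ γ ∧ walkStep e δ γ < γ := by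
    intro γ hδγ hγlam
    rcases Ordinal.zero_or_succ_or_isSuccLimit γ with h0 | ⟨η, hη⟩ | hlim
    · exact absurd (h0 ▸ hδγ) (not_lt_of_ge (zero_le (a := δ)))
    · have hη' : γ = η + 1 := by rw [← hη, Ordinal.add_one_eq_succ]
      have hδη : δ ≤ η := by
        rw [← hη] at hδγ; exact Order.lt_succ_iff.mp hδγ
      have hset : {x | x ∈ e γ ∧ δ ≤ x} = {η} := by
        rw [hη', heS η]
        ext x
        simp only [Set.mem_setOf_eq, Set.mem_singleton_iff]
        constructor
        · rintro ⟨hx, _⟩; exact hx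
        · rintro rfl; exact ⟨rfl, hδη⟩
      rw [walkStep, hset, csInf_singleton]
      exact ⟨hδη, by rw [← hη]; exact Order.lt_succ η⟩
    · have hsl : Order.IsSuccLimit γ := by
        refine ⟨?_, hlim.isSuccPrelimit⟩
        simpa [isMin_iff_eq_bot, Ordinal.bot_eq_zero] using hlim.1
      obtain ⟨h1, h2, _, _, _⟩ := heL γ hγlam hsl
      obtain ⟨y, hy, hδy⟩ := h2 δ hδγ
      have hne : {x | x ∈ e γ ∧ δ ≤ x}.Nonempty := ⟨y, hy, hδy⟩
      have hmem := csInf_mem hne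
      exact ⟨hmem.2, h1 hmem.1⟩
  -- the walk eventually reaches δ
  have exk : ∃ k, walk e δ β k = δ := by
    suffices H : ∀ γ : Ordinal, δ < γ → γ ≤ β → ∀ n, walk e δ β n = γ →
        ∃ k, walk e δ β k = δ from H β hδβ le_rfl 0 rfl
    intro γ
    induction γ using Ordinal.induction with
    | h γ IH =>
      intro hδγ hγβ n hn
      have hs := step γ hδγ (lt_of_le_of_lt hγβ hβlam)
      have hn1 : walk e δ β (n + 1) = walkStep e δ γ := by
        show walkStep e δ (walk e δ β n) = walkStep e δ γ
        rw [hn]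
      rcases eq_or_lt_of_le hs.1 with heq | hlt
      · exact ⟨n + 1, by rw [hn1, ← heq]⟩
      · exact IH _ hs.2 hlt (le_of_lt (lt_of_lt_of_le hs.2 hγβ)) (n + 1) hn1
  set k0 := kLen e δ β with hk0
  have hk0mem : walk e δ β k0 = δ := Nat.sInf_mem exk
  have hk0pos : 0 < k0 := by
    rcases Nat.eq_zero_or_pos k0 with h | h
    · rw [h] at hk0mem
      exact absurd hk0mem.symm (ne_of_lt hδβ)
    · exact h
  -- before reaching δ, the walk stays strictly above δ and at most β
  have aux : ∀ n < k0, δ < walk e δ β n ∧ walk e δ β n ≤ β := by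
    intro n
    induction n with
    | zero => exact fun _ => ⟨hδβ, le_rfl⟩
    | succ n ih =>
      intro hn
      obtain ⟨h1, h2⟩ := ih (Nat.lt_of_succ_lt hn)
      have hs := step _ h1 (lt_of_le_of_lt h2 hβlam)
      have hne : walk e δ β (n + 1) ≠ δ := by
        intro h
        exact absurd hn (not_lt.mpr (Nat.sInf_le h))
      exact ⟨lt_of_le_of_ne hs.1 (Ne.symm hne), le_of_lt (lt_of_lt_of_le hs.2 h2)⟩
  set m := k0 - 1 with hm
  have hmk0 : m < k0 := Nat.sub_lt hk0pos one_pos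
  have hm1 : m + 1 = k0 := Nat.succ_pred_eq_of_pos hk0pos
  obtain ⟨hδγ, hγβ⟩ := aux m hmk0
  set γ := walk e δ β m with hγ
  have hstepδ : walkStep e δ γ = δ := by
    have : walk e δ β (m + 1) = walkStep e δ γ := rfl
    rw [hm1, hk0mem] at this
    exact this.symm
  -- analyze γ
  rcases Ordinal.zero_or_succ_or_isSuccLimit γ with h0 | ⟨η, hη⟩ | hlim
  · exact absurd (h0 ▸ hδγ) (not_lt_of_ge (zero_le (a := δ)))
  · have hη' : γ = η + 1 := by rw [← hη, Ordinal.add_one_eq_succ]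
    have hδη : δ ≤ η := by
      rw [← hη] at hδγ; exact Order.lt_succ_iff.mp hδγ
    have hset : {x | x ∈ e γ ∧ δ ≤ x} = {η} := by
      rw [hη', heS η]
      ext x
      simp only [Set.mem_setOf_eq, Set.mem_singleton_iff]
      constructor
      · rintro ⟨hx, _⟩; exact hx
      · rintro rfl; exact ⟨rfl, hδη⟩
    have : η = δ := by
      rw [walkStep, hset, csInf_singleton] at hstepδ
      exact hstepδ
    show γ = δ + 1
    rw [hη', this]
  · exfalso
    have hsl : Order.IsSuccLimit γ := by
      refine ⟨?_, hlim.isSuccPrelimit⟩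
      simpa [isMin_iff_eq_bot, Ordinal.bot_eq_zero] using hlim.1
    obtain ⟨h1, h2, _, _, h5⟩ := heL γ (lt_of_le_of_lt hγβ hβlam) hsl
    have hne : {x | x ∈ e γ ∧ δ ≤ x}.Nonempty := by
      obtain ⟨y, hy, hδy⟩ := h2 δ hδγ
      exact ⟨y, hy, hδy⟩
    have hmem := csInf_mem hne
    rw [walkStep] at hstepδ
    rw [hstepδ] at hmem
    exact h5 δ hmem.1 hδcof
end
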